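/- Let r, s be integers with 1 ≤ r < s and s − r not divisible by 3; put r̂ = 2r+s, ŝ = r+2s, g = r+s−1, and let Ĥ = {3i + r̂ : i ∈ ℕ₀} ∪ {3i + ŝ : i ∈ ℕ₀} ∪ {3i + 3(r+s) : i ∈ ℕ₀}. For n ∈ ℕ₀ let N̂(n) denote the n-th smallest element of Ĥ (indexed from 0). Then N̂(g−1) = 2g − 2 + r + s (equivalently 3(r+s) − 4), and for every integer i ≥ g one has N̂(i) = g + r + s + i. -/
import Mathlib


/-- With `r̂ = 2r+s`, `ŝ = r+2s`, `g = r+s−1`,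
`Ĥ = {3i+r̂} ∪ {3i+ŝ} ∪ {3i+3(r+s)}`, and `N̂(n)` the `n`-th smallest element of `Ĥ`
(indexed from 0): `N̂(g−1) = 2g−2+r+s` and `N̂(i) = g+r+s+i` for every `i ≥ g`. -/
theorem stmt9 (r s : ℕ) (hr : 1 ≤ r) (hrs : r < s) (h3 : ¬ (3 ∣ (s - r)))
    (g : ℕ) (hg : g = r + s - 1) (p : ℕ → Prop)
    (hp : ∀ n, p n ↔ (∃ i, n = 3*i + (2*r+s)) ∨ (∃ i, n = 3*i + (r+2*s))
                      ∨ (∃ i, n = 3*i + 3*(r+s))) :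
    Nat.nth p (g - 1) = 2*g - 2 + r + s ∧
    ∀ i, g ≤ i → Nat.nth p i = g + r + s + i := by
  classical
  have hq : ∀ n, p n ↔ ((2*r+s ≤ n ∧ n % 3 = (2*r+s) % 3) ∨ (r+2*s ≤ n ∧ n % 3 = (r+2*s) % 3)
      ∨ (3*(r+s) ≤ n ∧ n % 3 = 0)) := by
    intro n
    rw [hp]
    constructor
    · rintro (⟨i, rfl⟩ | ⟨i, rfl⟩ | ⟨i, rfl⟩) <;> omega
    · rintro (⟨h1, h2⟩ | ⟨h1, h2⟩ | ⟨h1, h2⟩)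
      · exact Or.inl ⟨(n - (2*r+s))/3, by omega⟩
      · exact Or.inr (Or.inl ⟨(n - (r+2*s))/3, by omega⟩)
      · exact Or.inr (Or.inr ⟨(n - 3*(r+s))/3, by omega⟩)
  have hm1 : (2*r+s) % 3 ≠ (r+2*s) % 3 := by omega
  have hm2 : (2*r+s) % 3 ≠ 0 := by omega
  have hm3 : (r+2*s) % 3 ≠ 0 := by omega
  have step : ∀ a n : ℕ, (n+1-a+2)/3 = (n-a+2)/3 + (if a ≤ n ∧ n % 3 = a % 3 then 1 else 0) := by
    intro a n
    split <;> omega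
  have key : ∀ n, Nat.count p n =
      (n - (2*r+s) + 2)/3 + (n - (r+2*s) + 2)/3 + (n - 3*(r+s) + 2)/3 := by
    intro n
    induction n with
    | zero => rw [Nat.count_zero]; omega
    | succ n ih =>
      rw [Nat.count_succ, ih, step (2*r+s) n, step (r+2*s) n, step (3*(r+s)) n]
      simp only [hq n]
      split_ifs <;> omega
  constructor
  · have hmem : p (3*(r+s) - 4) := by rw [hq]; omega
    have h := Nat.nth_count hmem
    have hc : Nat.count p (3*(r+s) - 4) = g - 1 := by
      rw [key]
      have e1 : 3*(r+s) - 4 - (2*r+s) + 2 = r+2*s-2 := by omega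
      have e2 : 3*(r+s) - 4 - (r+2*s) + 2 = 2*r+s-2 := by omega
      have e3 : 3*(r+s) - 4 - 3*(r+s) + 2 = 2 := by omega
      rw [e1, e2, e3]
      omega
    rw [hc] at h
    omega
  · intro i hi
    have hmem : p (g + r + s + i) := by rw [hq]; omega
    have h := Nat.nth_count hmem
    have hc : Nat.count p (g + r + s + i) = i := by
      rw [key]
      have e1 : g + r + s + i - (2*r+s) + 2 = s+1+i := by omega
      have e2 : g + r + s + i - (r+2*s) + 2 = r+1+i := by omega
      have e3 : g + r + s + i - 3*(r+s) + 2 = i - (r+s+1) + 2 := by omega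
      rw [e1, e2, e3]
      rcases Nat.lt_or_ge i (r+s+1) with hcase | hcase
      · have e4 : i - (r+s+1) + 2 = 2 := by omega
        rw [e4]; omega
      · omega
    rwa [hc] at h
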